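/- Let a ≠ 0 and μ, ν ∈ ℝ, λ ∈ ℂ. The indicial equation s(s−1) + (aμ+1)s + a²(ν−λ) = 0 simplifies to s² + aμs + a²(ν−λ) = 0, and if 16μ²(Re λ − ν) + (Im λ)² > 0 then this equation has one root with positive real part and one root with negative real part. -/

import Mathlib

theorem stmt_3 (a μ ν : ℝ) (lam : ℂ) (ha : a ≠ 0) :
    (∀ s : ℂ, s * (s - 1) + ((a : ℂ) * μ + 1) * s + (a : ℂ)^2 * ((ν : ℂ) - lam)
        = s^2 + (a : ℂ) * μ * s + (a : ℂ)^2 * ((ν : ℂ) - lam)) ∧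
    (16 * μ^2 * (lam.re - ν) + lam.im^2 > 0 →
      ∃ s₁ s₂ : ℂ,
        s₁^2 + (a : ℂ) * μ * s₁ + (a : ℂ)^2 * ((ν : ℂ) - lam) = 0 ∧
        s₂^2 + (a : ℂ) * μ * s₂ + (a : ℂ)^2 * ((ν : ℂ) - lam) = 0 ∧
        0 < s₁.re ∧ s₂.re < 0) := by
  refine ⟨fun s => by ring, fun h => ?_⟩
  set b : ℂ := (a : ℂ) * μ with hb
  set c : ℂ := (a : ℂ)^2 * ((ν : ℂ) - lam) with hc
  -- a square root of the discriminant
  obtain ⟨w₀, hw₀⟩ : ∃ w : ℂ, w^2 = b^2 - 4*c :=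
    IsAlgClosed.exists_pow_nat_eq (b^2 - 4*c) zero_lt_two
  -- choose the root with nonnegative real part
  obtain ⟨w, hw, hwre⟩ : ∃ w : ℂ, w^2 = b^2 - 4*c ∧ 0 ≤ w.re := by
    rcases le_total 0 w₀.re with h0 | h0
    · exact ⟨w₀, hw₀, h0⟩
    · exact ⟨-w₀, by rw [neg_pow]; simpa using hw₀, by simpa using neg_nonneg.mpr h0⟩
  -- real-part information about the discriminant
  have hD : b^2 - 4*c = ((a^2*(μ^2 - 4*ν) : ℝ) : ℂ) + ((4*a^2 : ℝ) : ℂ) * lam := by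
    rw [hb, hc]; push_cast; ring
  have hDre : (b^2 - 4*c).re = a^2*(μ^2 - 4*ν) + 4*a^2 * lam.re := by
    rw [hD]; simp [Complex.add_re, Complex.mul_re, pow_two]
  have hDim : (b^2 - 4*c).im = 4*a^2 * lam.im := by
    rw [hD]; simp [Complex.add_im, Complex.mul_im, pow_two]
  -- |w|^2 = |D|
  have habs : w.re^2 + w.im^2 = ‖b^2 - 4*c‖ := by
    rw [← hw]
    rw [norm_pow, ← Complex.normSq_eq_norm_sq, Complex.normSq_apply]
    ring
  have hre2 : w.re^2 - w.im^2 = (b^2 - 4*c).re := by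
    rw [← hw]
    simp [pow_two, Complex.mul_re]
  -- key inequality : w.re^2 > (a*μ)^2
  have hA : 0 ≤ ‖b^2 - 4*c‖ := norm_nonneg _
  have hAsq : (‖b^2 - 4*c‖)^2 = (b^2 - 4*c).re^2 + (b^2 - 4*c).im^2 := by
    rw [Complex.sq_norm, Complex.normSq_apply]; ring
  have ha2 : 0 < a^2 := by positivity
  have hkey : (a*μ)^2 < w.re^2 := by
    have h2 : 2 * w.re^2 = (b^2 - 4*c).re + ‖b^2 - 4*c‖ := by
      linarith [habs, hre2]
    rw [hDre, hDim] at hAsq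
    rw [hDre] at h2
    by_contra hcon
    push_neg at hcon
    have ht : 0 ≤ 2*(a*μ)^2 - (a^2*(μ^2 - 4*ν) + 4*a^2 * lam.re) := by nlinarith
    have hsq : (‖b^2 - 4*c‖)^2 ≤ (2*(a*μ)^2 - (a^2*(μ^2 - 4*ν) + 4*a^2 * lam.re))^2 := by
      nlinarith
    nlinarith [mul_pos (mul_pos ha2 ha2) h, sq_nonneg (a^2*lam.im), sq_nonneg lam.im,
      mul_pos ha2 ha2]
  have hab : |a*μ| < w.re := by
    rcases abs_cases (a*μ) with ⟨h1, _⟩ | ⟨h1, _⟩ <;> nlinarith [abs_nonneg (a*μ)]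
  refine ⟨(-b + w)/2, (-b - w)/2, ?_, ?_, ?_, ?_⟩
  · linear_combination hw / 4
  · linear_combination hw / 4
  · have : ((-b + w)/2).re = (-(a*μ) + w.re)/2 := by
      rw [hb]
      rw [show ((2:ℂ)) = ((2:ℝ):ℂ) by norm_num, Complex.div_ofReal_re]
      simp
    rw [this]
    have := abs_lt.mp hab
    linarith [this.1]
  · have : ((-b - w)/2).re = (-(a*μ) - w.re)/2 := by
      rw [hb]
      rw [show ((2:ℂ)) = ((2:ℝ):ℂ) by norm_num, Complex.div_ofReal_re]
      simp
    rw [this]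
    have := abs_lt.mp hab
    linarith [this.2]
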